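/- Let ι be a finite nonempty type, α ∈ [0, 1), δ ≥ 0, Ω ≥ 1, and let (p_r) be strictly positive probability distributions on ι such that KL(p_r ‖ p_{r−1}) ≤ δ for all r ∈ {t−Ω+1, …, t}, and TV(p_{r+1}, p_r) ≤ α·TV(p_r, p_{r−1}) for all r ≥ t. Let i ∈ ι be a strict maximizer of p_t with top-2 margin m = p_t(i) − max_{j ≠ i} p_t(j). If Ω·√(δ/2) + (1/(1 − α))·√(δ/2) < m/2, then i is the unique maximizer of p_{t+s} for every s ≥ 0. -/

import Mathlib

/-- A probability distribution on a finite type: nonnegative and sums to 1. -/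
def IsProbDist {ι : Type*} [Fintype ι] (p : ι → ℝ) : Prop :=
  (∀ i, 0 ≤ p i) ∧ ∑ i, p i = 1

/-- Total variation distance between two functions on a finite type. -/
noncomputable def TV {ι : Type*} [Fintype ι] (p q : ι → ℝ) : ℝ :=
  (1 / 2) * ∑ i, |p i - q i|

/-- Kullback–Leibler divergence on a finite type (terms with `p i = 0` contribute `0`,
since `Real.log 0 = 0`). -/
noncomputable def KL {ι : Type*} [Fintype ι] (p q : ι → ℝ) : ℝ :=
  ∑ i, p i * Real.log (p i / q i)

section Aux
open Real Set

lemma hasDerivAt_h (t : ℝ) (ht : 0 < t) :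
    HasDerivAt (fun t : ℝ => Real.log t - 2*(t-1)/(t+1)) ((t-1)^2/(t*(t+1)^2)) t := by
  have h1 : HasDerivAt Real.log t⁻¹ t := Real.hasDerivAt_log ht.ne'
  have hnum : HasDerivAt (fun t : ℝ => 2*(t-1)) 2 t := by
    simpa using ((hasDerivAt_id t).sub_const (1:ℝ)).const_mul (2:ℝ)
  have hden : HasDerivAt (fun t : ℝ => t+1) 1 t := (hasDerivAt_id t).add_const 1
  have h2 := hnum.div hden (by linarith)
  have := h1.sub h2
  refine this.congr_deriv ?_
  field_simp
  ring

lemma h_mono : MonotoneOn (fun t : ℝ => Real.log t - 2*(t-1)/(t+1)) (Set.Ioi 0) := by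
  apply monotoneOn_of_deriv_nonneg (convex_Ioi 0)
  · intro t ht
    exact ((hasDerivAt_h t ht).differentiableAt).continuousAt.continuousWithinAt
  · intro t ht
    rw [interior_Ioi] at ht
    exact ((hasDerivAt_h t ht).differentiableAt).differentiableWithinAt
  · intro t ht
    rw [interior_Ioi] at ht
    rw [(hasDerivAt_h t ht).deriv]
    have ht' : (0:ℝ) < t := ht
    positivity

lemma log_lb {t : ℝ} (ht : 1 ≤ t) : 2*(t-1)/(t+1) ≤ Real.log t := by
  have := h_mono (Set.mem_Ioi.2 one_pos) (Set.mem_Ioi.2 (lt_of_lt_of_le one_pos ht)) ht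
  simp only [Real.log_one] at this
  norm_num at this
  linarith

lemma log_ub {t : ℝ} (ht0 : 0 < t) (ht : t ≤ 1) : Real.log t ≤ 2*(t-1)/(t+1) := by
  have := h_mono (Set.mem_Ioi.2 ht0) (Set.mem_Ioi.2 one_pos) ht
  simp only [Real.log_one] at this
  norm_num at this
  linarith

lemma hasDerivAt_g (t : ℝ) (ht : 0 < t) :
    HasDerivAt (fun t : ℝ => t*Real.log t - t + 1 - 3*(t-1)^2/(2*(t+2)))
      (Real.log t - 3*(t-1)*(t+5)/(2*(t+2)^2)) t := by
  have h1 : HasDerivAt (fun t : ℝ => t * Real.log t) (Real.log t + 1) t := by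
    have := (hasDerivAt_id t).mul (Real.hasDerivAt_log ht.ne')
    refine this.congr_deriv ?_
    field_simp
    simp only [id]
    ring
  have hnum : HasDerivAt (fun t : ℝ => 3*(t-1)^2) (3*(2*(t-1))) t := by
    have : HasDerivAt (fun t : ℝ => (t-1)^2) (2*(t-1)) t := by
      simpa using ((hasDerivAt_id t).sub_const (1:ℝ)).fun_pow 2
    simpa [mul_comm] using this.const_mul (3:ℝ)
  have hden : HasDerivAt (fun t : ℝ => 2*(t+2)) 2 t := by
    simpa using ((hasDerivAt_id t).add_const (2:ℝ)).const_mul (2:ℝ)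
  have h4 := hnum.div hden (by linarith)
  have := ((h1.sub (hasDerivAt_id t)).add_const (1:ℝ)).sub h4
  refine this.congr_deriv ?_
  have h2 : t + 2 ≠ 0 := by linarith
  field_simp
  ring

lemma g_nonneg {t : ℝ} (ht : 0 < t) : 3*(t-1)^2/(2*(t+2)) ≤ t*Real.log t - t + 1 := by
  set g : ℝ → ℝ := fun t => t*Real.log t - t + 1 - 3*(t-1)^2/(2*(t+2)) with hg
  have hg1 : g 1 = 0 := by simp [hg]
  have key : 0 ≤ g t := by
    rcases le_or_gt 1 t with h1 | h1
    · -- monotone on Ici 1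
      have mono : MonotoneOn g (Set.Ici 1) := by
        apply monotoneOn_of_deriv_nonneg (convex_Ici 1)
        · intro x hx
          have hx' : (0:ℝ) < x := lt_of_lt_of_le one_pos hx
          exact (hasDerivAt_g x hx').differentiableAt.continuousAt.continuousWithinAt
        · intro x hx
          rw [interior_Ici] at hx
          exact (hasDerivAt_g x (lt_trans one_pos hx)).differentiableAt.differentiableWithinAt
        · intro x hx
          rw [interior_Ici] at hx
          have hx1 : (1:ℝ) < x := hx
          have hx0 : (0:ℝ) < x := lt_trans one_pos hx1
          rw [(hasDerivAt_g x hx0).deriv]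
          have hl := log_lb hx1.le
          have hkey : 2*(x-1)/(x+1) - 3*(x-1)*(x+5)/(2*(x+2)^2)
              = (x-1)^3/(2*(x+1)*(x+2)^2) := by
            field_simp
            ring
          have hpos : 0 ≤ (x-1)^3/(2*(x+1)*(x+2)^2) := by
            apply div_nonneg (pow_nonneg (by linarith) 3)
            positivity
          linarith
      have := mono (Set.mem_Ici.2 le_rfl) (Set.mem_Ici.2 h1) h1
      rwa [hg1] at this
    · -- antitone on Icc 0 1
      have anti : AntitoneOn g (Set.Icc 0 1) := by
        apply antitoneOn_of_deriv_nonpos (convex_Icc 0 1)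
        · apply ContinuousOn.sub
          apply ContinuousOn.add
          apply ContinuousOn.sub
          · exact Real.continuous_mul_log.continuousOn
          · exact continuousOn_id
          · exact continuousOn_const
          · exact ContinuousOn.div (by fun_prop) (by fun_prop)
              (fun x hx => by have := hx.1; intro h; nlinarith [hx.1])
        · intro x hx
          rw [interior_Icc] at hx
          exact (hasDerivAt_g x hx.1).differentiableAt.differentiableWithinAt
        · intro x hx
          rw [interior_Icc] at hx
          rw [(hasDerivAt_g x hx.1).deriv]
          have hl := log_ub hx.1 hx.2.le
          have hkey : 3*(x-1)*(x+5)/(2*(x+2)^2) - 2*(x-1)/(x+1)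
              = -((x-1)^3/(2*(x+1)*(x+2)^2)) := by
            have h1 : x + 1 ≠ 0 := by nlinarith [hx.1]
            have h2 : x + 2 ≠ 0 := by nlinarith [hx.1]
            field_simp
            ring
          have hpos : 0 ≤ -((x-1)^3/(2*(x+1)*(x+2)^2)) := by
            have h1 : (x-1)^3 ≤ 0 := (by decide : Odd 3).pow_nonpos (by linarith [hx.2])
            have h2 : 0 < 2*(x+1)*(x+2)^2 := by nlinarith [hx.1]
            have := div_nonpos_of_nonpos_of_nonneg h1 h2.le
            linarith
          linarith
      have := anti (Set.mem_Icc.2 ⟨ht.le, h1.le⟩) (Set.mem_Icc.2 ⟨zero_le_one, le_rfl⟩) h1.le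
      rwa [hg1] at this
  simp only [hg] at key
  linarith

lemma pointwise_bound {x y : ℝ} (hx : 0 < x) (hy : 0 < y) :
    3*(x-y)^2/(2*(x+2*y)) + (x - y) ≤ x * Real.log (x/y) := by
  have ht : 0 < x / y := div_pos hx hy
  have hB := g_nonneg ht
  have e1 : y * (3*(x/y-1)^2/(2*(x/y+2))) = 3*(x-y)^2/(2*(x+2*y)) := by
    have h1 : x + 2*y ≠ 0 := by positivity
    field_simp
  have e2 : y * (x/y * Real.log (x/y) - x/y + 1) = x * Real.log (x/y) - x + y := by
    field_simp
  nlinarith [mul_le_mul_of_nonneg_left hB hy.le]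

lemma TV_nonneg {ι : Type*} [Fintype ι] (p q : ι → ℝ) : 0 ≤ TV p q := by
  unfold TV
  have : 0 ≤ ∑ i, |p i - q i| := Finset.sum_nonneg fun i _ => abs_nonneg _
  linarith

lemma pinsker {ι : Type*} [Fintype ι] (p q : ι → ℝ)
    (hp : IsProbDist p) (hq : IsProbDist q)
    (hppos : ∀ i, 0 < p i) (hqpos : ∀ i, 0 < q i) :
    TV p q ^ 2 ≤ KL p q / 2 := by
  set w : ι → ℝ := fun i => 2*(p i + 2*q i)/3 with hw
  have hwpos : ∀ i ∈ Finset.univ, 0 < w i := fun i _ => by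
    have := hppos i; have := hqpos i; positivity
  have hsumw : ∑ i, w i = 2 := by
    have : (∑ i, w i) = (2/3) * ∑ i, p i + (4/3) * ∑ i, q i := by
      rw [Finset.mul_sum, Finset.mul_sum, ← Finset.sum_add_distrib]
      exact Finset.sum_congr rfl (fun i _ => by simp [hw]; ring)
    rw [this, hp.2, hq.2]; norm_num
  have hsed := Finset.sq_sum_div_le_sum_sq_div Finset.univ
      (fun i => |p i - q i|) hwpos
  rw [hsumw] at hsed
  have hterm : ∀ i ∈ Finset.univ, |p i - q i|^2 / w i
      ≤ p i * Real.log (p i / q i) - (p i - q i) := by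
    intro i _
    have h1 : |p i - q i|^2 / w i = 3*(p i - q i)^2/(2*(p i + 2*q i)) := by
      rw [sq_abs, hw]
      rw [div_eq_div_iff (by have := hppos i; have := hqpos i; positivity)
        (by have := hppos i; have := hqpos i; positivity)]
      ring
    rw [h1]
    have := pointwise_bound (hppos i) (hqpos i)
    linarith
  have hsum := Finset.sum_le_sum hterm
  have hRHS : ∑ i, (p i * Real.log (p i / q i) - (p i - q i)) = KL p q := by
    rw [Finset.sum_sub_distrib, Finset.sum_sub_distrib, hp.2, hq.2]
    simp [KL]
  rw [hRHS] at hsum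
  have hchain : (∑ i, |p i - q i|) ^ 2 / 2 ≤ KL p q := le_trans hsed hsum
  unfold TV
  nlinarith [hchain]

lemma TV_symm {ι : Type*} [Fintype ι] (p q : ι → ℝ) : TV p q = TV q p := by
  unfold TV
  congr 1
  exact Finset.sum_congr rfl fun i _ => abs_sub_comm _ _

lemma TV_triangle {ι : Type*} [Fintype ι] (p q r : ι → ℝ) :
    TV p r ≤ TV p q + TV q r := by
  unfold TV
  rw [← mul_add, ← Finset.sum_add_distrib]
  apply mul_le_mul_of_nonneg_left _ (by norm_num)
  exact Finset.sum_le_sum fun i _ => abs_sub_le _ _ _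

lemma TV_pair {ι : Type*} [Fintype ι] [DecidableEq ι] (p q : ι → ℝ) {i j : ι} (hij : i ≠ j) :
    |p i - q i| + |p j - q j| ≤ 2 * TV p q := by
  unfold TV
  have hsub : ({i, j} : Finset ι) ⊆ Finset.univ := Finset.subset_univ _
  have := Finset.sum_le_sum_of_subset_of_nonneg hsub
    (fun k _ _ => abs_nonneg (p k - q k))
  rw [Finset.sum_pair hij] at this
  linarith

lemma geom_bound {α : ℝ} (h0 : 0 ≤ α) (h1 : α < 1) (n : ℕ) :
    ∑ k ∈ Finset.range n, α ^ k ≤ 1 / (1 - α) := by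
  rw [geom_sum_eq h1.ne n]
  have he : (α ^ n - 1) / (α - 1) = (1 - α ^ n) / (1 - α) := by
    rw [← neg_div_neg_eq]; ring_nf
  rw [he]
  have hα : 0 < 1 - α := by linarith
  have : 1 - α ^ n ≤ 1 := by
    have := pow_nonneg h0 n
    linarith
  gcongr

end Aux

/-- Global argmax preservation.
If `KL (p r) (p (r-1)) ≤ δ` on the window `{t−Ω+1, …, t}`, the one-step contraction
`TV (p (r+1)) (p r) ≤ α · TV (p r) (p (r-1))` holds for all `r ≥ t`, `i` is a strict
maximizer of `p t` with top-2 margin `m`, and `Ω·√(δ/2) + (1/(1−α))·√(δ/2) < m/2`,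
then `i` is the unique maximizer of `p (t+s)` for every `s ≥ 0`. -/
theorem global_argmax_preservation
    {ι : Type*} [Fintype ι] [Nonempty ι] [DecidableEq ι]
    (α δ : ℝ) (hα : α ∈ Set.Ico (0 : ℝ) 1) (hδ : 0 ≤ δ)
    (Ω t : ℕ) (hΩ : 1 ≤ Ω) (ht : Ω ≤ t)
    (p : ℕ → ι → ℝ) (hprob : ∀ u, IsProbDist (p u)) (hpos : ∀ u i, 0 < p u i)
    (hKL : ∀ r ∈ Finset.Icc (t - Ω + 1) t, KL (p r) (p (r - 1)) ≤ δ)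
    (hcontr : ∀ r ≥ t, TV (p (r + 1)) (p r) ≤ α * TV (p r) (p (r - 1)))
    (i : ι) (hne : (Finset.univ.erase i).Nonempty)
    (hmax : ∀ j ≠ i, p t j < p t i)
    (hmargin : (Ω : ℝ) * Real.sqrt (δ / 2) + 1 / (1 - α) * Real.sqrt (δ / 2) <
      (p t i - (Finset.univ.erase i).sup' hne (p t)) / 2) :
    ∀ s : ℕ, ∀ j ≠ i, p (t + s) j < p (t + s) i := by
  obtain ⟨hα0, hα1⟩ := hα
  have h1α : 0 < 1 - α := by linarith
  set B0 := TV (p t) (p (t-1)) with hB0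
  have hKLt : KL (p t) (p (t-1)) ≤ δ := hKL t (Finset.mem_Icc.2 ⟨by omega, le_rfl⟩)
  have hB0sq : B0 ^ 2 ≤ δ / 2 :=
    le_trans (pinsker _ _ (hprob t) (hprob (t-1)) (hpos t) (hpos (t-1))) (by linarith)
  have hB0le : B0 ≤ Real.sqrt (δ/2) := by
    rw [Real.le_sqrt (TV_nonneg _ _) (by positivity)]
    exact hB0sq
  have hB0nonneg : 0 ≤ B0 := TV_nonneg (p t) (p (t-1))
  have hstep : ∀ k : ℕ, TV (p (t+k+1)) (p (t+k)) ≤ α ^ (k+1) * B0 := by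
    intro k
    induction k with
    | zero =>
      have h := hcontr t le_rfl
      simpa [hB0] using h
    | succ k ih =>
      have h := hcontr (t+k+1) (by omega)
      have e : t + k + 1 - 1 = t + k := by omega
      rw [e] at h
      calc TV (p (t+(k+1)+1)) (p (t+(k+1)))
          ≤ α * TV (p (t+k+1)) (p (t+k)) := h
        _ ≤ α * (α^(k+1) * B0) := mul_le_mul_of_nonneg_left ih hα0
        _ = α^(k+1+1) * B0 := by ring
  have hTVs : ∀ s : ℕ, TV (p (t+s)) (p t) ≤ (∑ k ∈ Finset.range s, α^(k+1)) * B0 := by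
    intro s
    induction s with
    | zero => simp [TV]
    | succ s ih =>
      have tri := TV_triangle (p (t+s+1)) (p (t+s)) (p t)
      have hs := hstep s
      rw [Finset.sum_range_succ, add_mul]
      calc TV (p (t+(s+1))) (p t) ≤ TV (p (t+s+1)) (p (t+s)) + TV (p (t+s)) (p t) := tri
        _ ≤ α^(s+1) * B0 + (∑ k ∈ Finset.range s, α^(k+1)) * B0 := add_le_add hs ih
        _ = (∑ k ∈ Finset.range s, α^(k+1)) * B0 + α^(s+1) * B0 := by ring
  have hsum_le : ∀ s : ℕ, (∑ k ∈ Finset.range s, α^(k+1)) ≤ 1/(1-α) := by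
    intro s
    have he : ∑ k ∈ Finset.range s, α^(k+1) = α * ∑ k ∈ Finset.range s, α^k := by
      rw [Finset.mul_sum]
      exact Finset.sum_congr rfl fun k _ => by ring
    rw [he]
    calc α * ∑ k ∈ Finset.range s, α^k ≤ 1 * (1/(1-α)) := by
          apply mul_le_mul hα1.le (geom_bound hα0 hα1 s)
            (Finset.sum_nonneg fun k _ => pow_nonneg hα0 k) zero_le_one
      _ = 1/(1-α) := one_mul _
  intro s j hj
  have hTV : TV (p (t+s)) (p t) ≤ 1/(1-α) * Real.sqrt (δ/2) :=
    le_trans (hTVs s)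
      (mul_le_mul (hsum_le s) hB0le hB0nonneg (by positivity))
  have hjle : p t j ≤ (Finset.univ.erase i).sup' hne (p t) :=
    Finset.le_sup' (p t) (Finset.mem_erase.2 ⟨hj, Finset.mem_univ j⟩)
  have hΩterm : 0 ≤ (Ω:ℝ) * Real.sqrt (δ/2) := by positivity
  have hpair := TV_pair (p (t+s)) (p t) (show i ≠ j from fun h => hj h.symm)
  have h1 : p t i - p (t+s) i ≤ |p (t+s) i - p t i| := by
    rw [abs_sub_comm]
    exact le_abs_self _
  have h2 : p (t+s) j - p t j ≤ |p (t+s) j - p t j| := le_abs_self _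
  have hlt : 2 * TV (p (t+s)) (p t)
      < p t i - (Finset.univ.erase i).sup' hne (p t) := by
    linarith [hmargin, hTV, hΩterm]
  linarith [hjle, hpair, h1, h2, hlt]
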